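/- arXiv:2302.01732 — 3 statements merged into one kernel-verified Lean document; each statement's English description precedes it below -/
import Mathlib

section
/- In the scalar case n = 1, set δ = |K|·H_m and Δ = [Q*_M + (H_M/2)(σ + |a|)²]·2|K|/|a|, and suppose σ > σ₀ > 0 and ε* > 0 satisfy σ₀ + ε*Δ(7|a| + 2σ)/(2|a|) < σ. Then for every ε ∈ (0, ε*] and every solution θ̃ of the scalar extremum-seeking error system with |θ̃(0)| ≤ σ₀, one has |θ̃(t)| < |θ̃(0)| + εΔ < σ for t ∈ [0, ε], and |θ̃(t)| < e^{−δ(t−ε)}(|θ̃(0)| + 3εΔ/2) + εΔ(2|a| + σ)/|a| < σ for all t ≥ ε. -/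
open Real MeasureTheory intervalIntegral

set_option maxHeartbeats 1000000

lemma ES_aux_integral (K H Qs a x s ε : ℝ) (l : ℕ) (ha : a ≠ 0) (hε : 0 < ε) (hl : 0 < l) :
    ∫ τ in s..(s + ε), K * (2 / a) * Real.sin (2 * π * l * τ / ε)
        * (Qs + H / 2 * (x + a * Real.sin (2 * π * l * τ / ε)) ^ 2) = K * H * x * ε := by
  have hπ := Real.pi_pos
  have hl' : (0:ℝ) < (l:ℝ) := by exact_mod_cast hl
  set c : ℝ := 2 * π * l / ε with hc
  have hc0 : (0:ℝ) < c := by positivity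
  have hφ : ∀ τ : ℝ, 2 * π * (l:ℝ) * τ / ε = c * τ := by intro τ; rw [hc]; ring
  set F : ℝ → ℝ := fun τ => K * (2 / a) *
      ( -(Qs + H / 2 * x ^ 2) / c * Real.cos (c * τ)
        + H * a * x * (τ / 2 - Real.sin (2 * (c * τ)) / (4 * c))
        + H * a ^ 2 / 2 * ((-Real.cos (c * τ) + Real.cos (c * τ) ^ 3 / 3) / c) ) with hF
  have hder : ∀ τ : ℝ, HasDerivAt F
      (K * (2 / a) * Real.sin (c * τ) * (Qs + H / 2 * (x + a * Real.sin (c * τ)) ^ 2)) τ := by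
    intro τ
    have h1 : HasDerivAt (fun τ : ℝ => c * τ) c τ := by
      simpa using (hasDerivAt_id τ).const_mul c
    have hcos : HasDerivAt (fun τ : ℝ => Real.cos (c * τ)) (-Real.sin (c * τ) * c) τ := h1.cos
    have h2 : HasDerivAt (fun τ : ℝ => 2 * (c * τ)) (2 * c) τ := by
      simpa using h1.const_mul 2
    have hsin2 : HasDerivAt (fun τ : ℝ => Real.sin (2 * (c * τ)))
        (Real.cos (2 * (c * τ)) * (2 * c)) τ := h2.sin
    have hcos3 : HasDerivAt (fun τ : ℝ => (Real.cos (c * τ)) ^ 3)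
        (3 * (Real.cos (c * τ)) ^ 2 * (-Real.sin (c * τ) * c)) τ := by
      simpa using hcos.fun_pow 3
    have ha1 : HasDerivAt (fun τ : ℝ => -(Qs + H / 2 * x ^ 2) / c * Real.cos (c * τ))
        (-(Qs + H / 2 * x ^ 2) / c * (-Real.sin (c * τ) * c)) τ :=
      hcos.const_mul _
    have ha2 : HasDerivAt (fun τ : ℝ => H * a * x * (τ / 2 - Real.sin (2 * (c * τ)) / (4 * c)))
        (H * a * x * (1 / 2 - Real.cos (2 * (c * τ)) * (2 * c) / (4 * c))) τ := by
      have hid : HasDerivAt (fun τ : ℝ => τ / 2) (1 / 2) τ := by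
        simpa using (hasDerivAt_id τ).div_const 2
      exact (hid.sub (hsin2.div_const (4 * c))).const_mul _
    have ha3 : HasDerivAt (fun τ : ℝ =>
        H * a ^ 2 / 2 * ((-Real.cos (c * τ) + Real.cos (c * τ) ^ 3 / 3) / c))
        (H * a ^ 2 / 2 * ((-(-Real.sin (c * τ) * c) + 3 * (Real.cos (c * τ)) ^ 2
          * (-Real.sin (c * τ) * c) / 3) / c)) τ :=
      ((hcos.neg.add (hcos3.div_const 3)).div_const c).const_mul _
    have hsum := ((ha1.add ha2).add ha3).const_mul (K * (2 / a))
    have hval : K * (2 / a) * (-(Qs + H / 2 * x ^ 2) / c * (-Real.sin (c * τ) * c)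
        + H * a * x * (1 / 2 - Real.cos (2 * (c * τ)) * (2 * c) / (4 * c))
        + H * a ^ 2 / 2 * ((-(-Real.sin (c * τ) * c) + 3 * (Real.cos (c * τ)) ^ 2
          * (-Real.sin (c * τ) * c) / 3) / c))
        = K * (2 / a) * Real.sin (c * τ) * (Qs + H / 2 * (x + a * Real.sin (c * τ)) ^ 2) := by
      simp only [Real.cos_two_mul, Real.cos_sq']
      field_simp
      ring
    rw [← hval]
    exact hsum
  have hcont : Continuous fun τ : ℝ => K * (2 / a) * Real.sin (c * τ)
      * (Qs + H / 2 * (x + a * Real.sin (c * τ)) ^ 2) := by fun_prop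
  have hFTC := intervalIntegral.integral_eq_sub_of_hasDerivAt
      (f := F) (a := s) (b := s + ε)
      (fun τ _ => hder τ) (hcont.intervalIntegrable s (s + ε))
  have hcos_per : Real.cos (c * (s + ε)) = Real.cos (c * s) := by
    rw [show c * (s + ε) = c * s + ((l : ℤ) : ℝ) * (2 * π) by rw [hc]; push_cast; field_simp,
      Real.cos_add_int_mul_two_pi]
  have hsin_per : Real.sin (2 * (c * (s + ε))) = Real.sin (2 * (c * s)) := by
    rw [show 2 * (c * (s + ε)) = 2 * (c * s) + ((2 * l : ℤ) : ℝ) * (2 * π) by rw [hc]; push_cast; field_simp,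
      Real.sin_add_int_mul_two_pi]
  calc ∫ τ in s..(s + ε), K * (2 / a) * Real.sin (2 * π * l * τ / ε)
        * (Qs + H / 2 * (x + a * Real.sin (2 * π * l * τ / ε)) ^ 2)
      = ∫ τ in s..(s + ε), K * (2 / a) * Real.sin (c * τ)
        * (Qs + H / 2 * (x + a * Real.sin (c * τ)) ^ 2) := by
        simp only [hφ]
    _ = F (s + ε) - F s := hFTC
    _ = K * H * x * ε := by
        simp only [hF, hcos_per, hsin_per]
        field_simp
        ring

set_option maxHeartbeats 4000000

/-- Remark 3, scalar continuous-time ES. -/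
theorem continuous_ES_practical_stability_scalar
    -- tuning parameters
    (a K : ℝ) (l : ℕ) (ha : a ≠ 0) (hK : K < 0) (hl : 0 < l)
    -- the unknown Hessian
    (H Hm HM : ℝ) (hHm : 0 < Hm) (hH : H ∈ Set.Icc Hm HM)
    -- the extremum value
    (Qs QM : ℝ) (hQM : 0 ≤ QM) (hQ : |Qs| ≤ QM)
    -- the constants δ and Δ
    (σ σ0 εstar δ Δ : ℝ)
    (hδ : δ = |K| * Hm)
    (hΔ : Δ = (QM + HM / 2 * (σ + |a|) ^ 2) * (2 * |K| / |a|))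
    (hσ0 : 0 < σ0) (hσ : σ0 < σ) (hεstar : 0 < εstar)
    (hΦ : σ0 + εstar * Δ * (7 * |a| + 2 * σ) / (2 * |a|) < σ)
    -- a solution of the scalar ES error system for some ε ∈ (0, ε*]
    (ε : ℝ) (hε : ε ∈ Set.Ioc 0 εstar)
    (θ : ℝ → ℝ) (hθ0 : |θ 0| ≤ σ0)
    (hode : ∀ t ≥ (0 : ℝ), HasDerivAt θ
      (K * (2 / a) * Real.sin (2 * π * l * t / ε)
        * (Qs + H / 2 * (θ t + a * Real.sin (2 * π * l * t / ε)) ^ 2)) t) :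
    (∀ t ∈ Set.Icc (0 : ℝ) ε,
        |θ t| < |θ 0| + ε * Δ ∧ |θ 0| + ε * Δ < σ) ∧
    (∀ t ≥ ε,
        |θ t| < Real.exp (-δ * (t - ε)) * (|θ 0| + 3 * ε * Δ / 2)
            + ε * Δ * (2 * |a| + σ) / |a| ∧
        Real.exp (-δ * (t - ε)) * (|θ 0| + 3 * ε * Δ / 2)
            + ε * Δ * (2 * |a| + σ) / |a| < σ) := by
  obtain ⟨hε0, hεle⟩ := hε
  obtain ⟨hHm', hHM'⟩ := hH
  have hπ := Real.pi_pos
  have hA : (0:ℝ) < |a| := abs_pos.mpr ha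
  have hKp : (0:ℝ) < -K := by linarith only [hK]
  have haK : |K| = -K := abs_of_neg hK
  have hHpos : 0 < H := lt_of_lt_of_le hHm hHm'
  have hHMpos : 0 < HM := lt_of_lt_of_le hHpos hHM'
  have hσpos : 0 < σ := lt_trans hσ0 hσ
  have hδ' : δ = -K * Hm := by rw [hδ, haK]
  have hδpos : 0 < δ := by rw [hδ']; positivity
  have hΔA : Δ * |a| = (QM + HM / 2 * (σ + |a|) ^ 2) * (2 * -K) := by
    rw [hΔ, haK]; field_simp
  have hσA : (0:ℝ) < σ + |a| := by linarith only [hσpos, hA]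
  have hQB : 0 < QM + HM / 2 * (σ + |a|) ^ 2 := by nlinarith only [mul_pos hσA hσA, hQM, hHMpos]
  have hΔpos : 0 < Δ := by nlinarith only [hΔA, mul_pos hQB hKp, hA]
  have hεΔpos : 0 < ε * Δ := mul_pos hε0 hΔpos
  -- master smallness inequality
  have hM : ε * Δ * (7 * |a| + 2 * σ) < (σ - σ0) * (2 * |a|) := by
    have h2A : (0:ℝ) < 2 * |a| := by linarith only [hA]
    have h1 : εstar * Δ * (7 * |a| + 2 * σ) / (2 * |a|) < σ - σ0 := by linarith only [hΦ]
    have h2 := (div_lt_iff₀ h2A).mp h1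
    have h7 : (0:ℝ) < Δ * (7 * |a| + 2 * σ) :=
      mul_pos hΔpos (by linarith only [hA, hσpos])
    have hmono := mul_le_mul_of_nonneg_right hεle h7.le
    nlinarith only [h2, hmono]
  have t1 : 7 * (ε * Δ * |a|) < 2 * (σ * |a|) := by
    linarith only [hM, mul_pos hεΔpos hσpos, mul_pos hσ0 hA]
  have hεΔ7 : 7 * (ε * Δ) < 2 * σ := by nlinarith only [t1, hA]
  have hΔlow : -K * HM * (σ + |a|) ^ 2 ≤ Δ * |a| := by
    linarith only [hΔA, mul_nonneg hKp.le hQM]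
  have hAM : 4 * (σ * |a|) ≤ (σ + |a|) ^ 2 := by linarith only [sq_nonneg (σ - |a|)]
  have hKHM : ε * (-K * HM) ≤ 1 / 14 := by
    have h3 : ε * (-K * HM) * (4 * (σ * |a|)) ≤ ε * (-K * HM) * ((σ + |a|) ^ 2) :=
      mul_le_mul_of_nonneg_left hAM (by positivity)
    have h1 : ε * (-K * HM * (σ + |a|) ^ 2) ≤ ε * (Δ * |a|) :=
      mul_le_mul_of_nonneg_left hΔlow hε0.le
    by_contra hcon
    push_neg at hcon
    have h6 := mul_lt_mul_of_pos_right hcon (show (0:ℝ) < 4 * (σ * |a|) by positivity)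
    linarith only [h3, h1, t1, h6]
  -- 1 + K*H*ε ∈ [0,1]
  have hr0 : 0 ≤ 1 + K * H * ε := by
    have h4 : ε * -K * H ≤ ε * -K * HM :=
      mul_le_mul_of_nonneg_left hHM' (mul_nonneg hε0.le hKp.le)
    linarith only [hKHM, h4]
  have hr1 : 1 + K * H * ε ≤ 1 := by linarith only [mul_pos (mul_pos hKp hHpos) hε0]
  -- the speed (Lipschitz-in-time) lemma
  have speed : ∀ M : ℝ, 0 ≤ M → ∀ s t : ℝ, 0 ≤ s → s ≤ t →
      (∀ τ ∈ Set.Icc s t, |θ τ| ≤ M) →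
      |θ t - θ s| ≤ (QM + HM / 2 * (M + |a|) ^ 2) * (2 * -K / |a|) * (t - s) := by
    intro M hM0 s t hs hst hbd
    have bound : ∀ τ ∈ Set.Icc s t,
        ‖K * (2 / a) * Real.sin (2 * π * l * τ / ε)
          * (Qs + H / 2 * (θ τ + a * Real.sin (2 * π * l * τ / ε)) ^ 2)‖
        ≤ (QM + HM / 2 * (M + |a|) ^ 2) * (2 * -K / |a|) := by
      intro τ hτ
      set u := Real.sin (2 * π * l * τ / ε) with hu
      have hu1 : |u| ≤ 1 := abs_le.mpr ⟨Real.neg_one_le_sin _, Real.sin_le_one _⟩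
      have hx : |θ τ| ≤ M := hbd τ hτ
      have h3 : |θ τ + a * u| ≤ M + |a| := by
        calc |θ τ + a * u| ≤ |θ τ| + |a * u| := abs_add_le _ _
          _ ≤ M + |a| := by
              rw [abs_mul]
              linarith only [hx, mul_le_mul_of_nonneg_left hu1 (abs_nonneg a)]
      have hy : (θ τ + a * u) ^ 2 ≤ (M + |a|) ^ 2 := by
        nlinarith only [sq_abs (θ τ + a * u), h3, abs_nonneg (θ τ + a * u)]
      have hX : |Qs + H / 2 * (θ τ + a * u) ^ 2| ≤ QM + HM / 2 * (M + |a|) ^ 2 := by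
        calc |Qs + H / 2 * (θ τ + a * u) ^ 2| ≤ |Qs| + |H / 2 * (θ τ + a * u) ^ 2| := abs_add_le _ _
          _ ≤ QM + HM / 2 * (M + |a|) ^ 2 := by
              rw [abs_of_nonneg (mul_nonneg (by linarith only [hHpos] : (0:ℝ) ≤ H / 2) (sq_nonneg _))]
              have h5 : H * (θ τ + a * u) ^ 2 ≤ HM * (M + |a|) ^ 2 :=
                mul_le_mul hHM' hy (sq_nonneg _) hHMpos.le
              linarith only [hQ, h5]
      have e0 : ‖K * (2 / a) * u * (Qs + H / 2 * (θ τ + a * u) ^ 2)‖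
          = (-K) * (2 / |a|) * (|u| * |Qs + H / 2 * (θ τ + a * u) ^ 2|) := by
        rw [Real.norm_eq_abs, abs_mul, abs_mul, abs_mul, abs_div, abs_two, haK]; ring
      rw [e0]
      have hB : |u| * |Qs + H / 2 * (θ τ + a * u) ^ 2| ≤ QM + HM / 2 * (M + |a|) ^ 2 := by
        nlinarith only [abs_nonneg (Qs + H / 2 * (θ τ + a * u) ^ 2), abs_nonneg u, hu1, hX]
      calc (-K) * (2 / |a|) * (|u| * |Qs + H / 2 * (θ τ + a * u) ^ 2|)
          ≤ (-K) * (2 / |a|) * (QM + HM / 2 * (M + |a|) ^ 2) :=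
            mul_le_mul_of_nonneg_left hB (by positivity)
        _ = (QM + HM / 2 * (M + |a|) ^ 2) * (2 * -K / |a|) := by ring
    have key := Convex.norm_image_sub_le_of_norm_hasDerivWithin_le
      (f := θ)
      (f' := fun τ => K * (2 / a) * Real.sin (2 * π * l * τ / ε)
        * (Qs + H / 2 * (θ τ + a * Real.sin (2 * π * l * τ / ε)) ^ 2))
      (s := Set.Icc s t)
      (fun τ hτ => (hode τ (le_trans hs hτ.1)).hasDerivWithinAt)
      bound (convex_Icc s t) (Set.left_mem_Icc.mpr hst) (Set.right_mem_Icc.mpr hst)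
    rw [Real.norm_eq_abs, Real.norm_eq_abs, abs_of_nonneg (sub_nonneg.mpr hst)] at key
    exact key
  have hΔeq : (QM + HM / 2 * (σ + |a|) ^ 2) * (2 * -K / |a|) = Δ := by
    rw [hΔ, haK]
  -- continuity of the vector field
  have hcontg : ∀ s t : ℝ, 0 ≤ s → ContinuousOn
      (fun τ => K * (2 / a) * Real.sin (2 * π * l * τ / ε)
        * (Qs + H / 2 * (θ τ + a * Real.sin (2 * π * l * τ / ε)) ^ 2)) (Set.Icc s t) := by
    intro s t hs
    have hθc : ContinuousOn θ (Set.Icc s t) := fun τ hτ =>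
      ((hode τ (le_trans hs hτ.1)).continuousAt).continuousWithinAt
    have hsc : Continuous fun τ : ℝ => Real.sin (2 * π * l * τ / ε) := by fun_prop
    exact (continuousOn_const.mul hsc.continuousOn).mul
      (continuousOn_const.add (continuousOn_const.mul
        ((hθc.add (continuousOn_const.mul hsc.continuousOn)).pow 2)))
  -- the one-period window estimate
  have window : ∀ s : ℝ, 0 ≤ s → (∀ τ ∈ Set.Icc s (s + ε), |θ τ| ≤ σ) →
      |θ (s + ε) - (1 + K * H * ε) * θ s| ≤ -K * H * (σ + |a|) * Δ * ε ^ 2 / |a| := by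
    intro s hs hbd
    have hsε : s ≤ s + ε := by linarith only [hε0]
    have hgi : IntervalIntegrable (fun τ => K * (2 / a) * Real.sin (2 * π * l * τ / ε)
        * (Qs + H / 2 * (θ τ + a * Real.sin (2 * π * l * τ / ε)) ^ 2)) volume s (s + ε) := by
      apply ContinuousOn.intervalIntegrable
      rw [Set.uIcc_of_le hsε]
      exact hcontg s (s + ε) hs
    have hg0i : IntervalIntegrable (fun τ => K * (2 / a) * Real.sin (2 * π * l * τ / ε)
        * (Qs + H / 2 * (θ s + a * Real.sin (2 * π * l * τ / ε)) ^ 2)) volume s (s + ε) :=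
      Continuous.intervalIntegrable (by fun_prop) _ _
    have hftc : ∫ τ in s..(s + ε), K * (2 / a) * Real.sin (2 * π * l * τ / ε)
        * (Qs + H / 2 * (θ τ + a * Real.sin (2 * π * l * τ / ε)) ^ 2) = θ (s + ε) - θ s := by
      apply intervalIntegral.integral_eq_sub_of_hasDerivAt
      · intro τ hτ
        rw [Set.uIcc_of_le hsε] at hτ
        exact hode τ (le_trans hs hτ.1)
      · exact hgi
    have h0 := ES_aux_integral K H Qs a (θ s) s ε l ha hε0 hl
    have hdiff : θ (s + ε) - (1 + K * H * ε) * θ s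
        = ∫ τ in s..(s + ε),
            (K * (2 / a) * Real.sin (2 * π * l * τ / ε)
              * (Qs + H / 2 * (θ τ + a * Real.sin (2 * π * l * τ / ε)) ^ 2)
            - K * (2 / a) * Real.sin (2 * π * l * τ / ε)
              * (Qs + H / 2 * (θ s + a * Real.sin (2 * π * l * τ / ε)) ^ 2)) := by
      rw [intervalIntegral.integral_sub hgi hg0i, hftc, h0]; ring
    have hptw : ∀ τ ∈ Set.Ioc s (s + ε),
        ‖K * (2 / a) * Real.sin (2 * π * l * τ / ε)
            * (Qs + H / 2 * (θ τ + a * Real.sin (2 * π * l * τ / ε)) ^ 2)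
          - K * (2 / a) * Real.sin (2 * π * l * τ / ε)
            * (Qs + H / 2 * (θ s + a * Real.sin (2 * π * l * τ / ε)) ^ 2)‖
        ≤ 2 * -K * H * (σ + |a|) * Δ / |a| * (τ - s) := by
      intro τ hτ
      set u := Real.sin (2 * π * l * τ / ε) with hu
      have hu1 : |u| ≤ 1 := abs_le.mpr ⟨Real.neg_one_le_sin _, Real.sin_le_one _⟩
      have hθτ : |θ τ - θ s| ≤ Δ * (τ - s) := by
        have hsp := speed σ hσpos.le s τ hs hτ.1.le
          (fun ρ hρ => hbd ρ ⟨hρ.1, le_trans hρ.2 hτ.2⟩)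
        rw [hΔeq] at hsp; exact hsp
      have h1 : |θ τ| ≤ σ := hbd τ ⟨hτ.1.le, hτ.2⟩
      have h2 : |θ s| ≤ σ := hbd s ⟨le_refl s, hsε⟩
      have hz : |2 * a * u| ≤ 2 * |a| := by
        rw [abs_mul, abs_mul, abs_two]
        linarith only [mul_le_mul_of_nonneg_left hu1 (mul_nonneg (by norm_num : (0:ℝ) ≤ 2) (abs_nonneg a))]
      have hsum : |θ τ + θ s + 2 * a * u| ≤ 2 * (σ + |a|) := by
        calc |θ τ + θ s + 2 * a * u| ≤ |θ τ + θ s| + |2 * a * u| := abs_add_le _ _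
          _ ≤ |θ τ| + |θ s| + |2 * a * u| := by linarith only [abs_add_le (θ τ) (θ s)]
          _ ≤ 2 * (σ + |a|) := by linarith only [h1, h2, hz]
      have e1 : |(2:ℝ) / a| = 2 / |a| := by rw [abs_div, abs_two]
      have e2 : |H / 2| = H / 2 := abs_of_pos (half_pos hHpos)
      have e0 : |K * (2 / a) * u * (H / 2)| ≤ -K * (2 / |a|) * (H / 2) := by
        rw [abs_mul, abs_mul, abs_mul, e1, e2, haK]
        calc -K * (2 / |a|) * |u| * (H / 2) ≤ -K * (2 / |a|) * 1 * (H / 2) := by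
              apply mul_le_mul_of_nonneg_right _ (le_of_lt (half_pos hHpos))
              exact mul_le_mul_of_nonneg_left hu1 (mul_nonneg hKp.le (by positivity))
          _ = -K * (2 / |a|) * (H / 2) := by ring
      have hR : |(θ τ - θ s) * (θ τ + θ s + 2 * a * u)| ≤ Δ * (τ - s) * (2 * (σ + |a|)) := by
        rw [abs_mul]
        exact mul_le_mul hθτ hsum (abs_nonneg _)
          (mul_nonneg hΔpos.le (by linarith only [hτ.1]))
      calc ‖K * (2 / a) * u * (Qs + H / 2 * (θ τ + a * u) ^ 2)
            - K * (2 / a) * u * (Qs + H / 2 * (θ s + a * u) ^ 2)‖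
          = |(K * (2 / a) * u * (H / 2)) * ((θ τ - θ s) * (θ τ + θ s + 2 * a * u))| := by
            rw [Real.norm_eq_abs]; congr 1; ring
        _ = |K * (2 / a) * u * (H / 2)| * |(θ τ - θ s) * (θ τ + θ s + 2 * a * u)| := abs_mul _ _
        _ ≤ (-K * (2 / |a|) * (H / 2)) * (Δ * (τ - s) * (2 * (σ + |a|))) := by
            apply mul_le_mul e0 hR (abs_nonneg _)
            exact mul_nonneg (mul_nonneg hKp.le (by positivity)) (half_pos hHpos).le
        _ = 2 * -K * H * (σ + |a|) * Δ / |a| * (τ - s) := by ring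
    have hae : ∀ᵐ τ ∂(volume.restrict (Set.uIoc s (s + ε))),
        ‖K * (2 / a) * Real.sin (2 * π * l * τ / ε)
            * (Qs + H / 2 * (θ τ + a * Real.sin (2 * π * l * τ / ε)) ^ 2)
          - K * (2 / a) * Real.sin (2 * π * l * τ / ε)
            * (Qs + H / 2 * (θ s + a * Real.sin (2 * π * l * τ / ε)) ^ 2)‖
        ≤ 2 * -K * H * (σ + |a|) * Δ / |a| * (τ - s) := by
      rw [Set.uIoc_of_le hsε]
      exact (MeasureTheory.ae_restrict_mem measurableSet_Ioc).mono fun τ hτ => hptw τ hτ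
    have hgint : IntervalIntegrable (fun τ => 2 * -K * H * (σ + |a|) * Δ / |a| * (τ - s))
        volume s (s + ε) := Continuous.intervalIntegrable (by fun_prop) _ _
    have hIg : ∫ τ in s..(s + ε), 2 * -K * H * (σ + |a|) * Δ / |a| * (τ - s)
        = 2 * -K * H * (σ + |a|) * Δ / |a| * (ε ^ 2 / 2) := by
      rw [intervalIntegral.integral_const_mul]
      have hid : ∫ τ in s..(s + ε), (τ - s) = ε ^ 2 / 2 := by
        rw [intervalIntegral.integral_sub intervalIntegrable_id intervalIntegrable_const,
          integral_id, intervalIntegral.integral_const, smul_eq_mul]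
        ring
      rw [hid]
    have hC0 : (0:ℝ) ≤ 2 * -K * H * (σ + |a|) * Δ :=
      le_of_lt (mul_pos (mul_pos (mul_pos (mul_pos two_pos hKp) hHpos) hσA) hΔpos)
    rw [hdiff, ← Real.norm_eq_abs]
    refine le_trans (intervalIntegral.norm_integral_le_of_norm_le hsε
      (by rw [Set.uIoc_of_le hsε] at hae; exact (ae_restrict_iff' measurableSet_Ioc).mp hae) hgint) ?_
    rw [hIg]
    exact le_of_eq (by ring)
  have hO0 : (0:ℝ) ≤ ε * Δ * (σ + |a|) / |a| := by positivity
  -- gridpoint estimate by induction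
  have grid : ∀ k : ℕ, (∀ τ ∈ Set.Icc 0 (((k:ℝ) + 1) * ε), |θ τ| ≤ σ) →
      |θ (((k:ℝ) + 1) * ε)| ≤ (1 + K * H * ε) ^ k * (|θ 0| + ε * Δ)
        + ε * Δ * (σ + |a|) / |a| := by
    intro k
    induction k with
    | zero =>
      intro hbd
      have h1e : ((0:ℕ):ℝ) + 1 = 1 := by norm_num
      rw [h1e, one_mul] at hbd ⊢
      have hsp := speed σ hσpos.le 0 ε le_rfl hε0.le hbd
      rw [hΔeq] at hsp
      have habs := abs_add_le (θ 0) (θ ε - θ 0)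
      rw [show θ 0 + (θ ε - θ 0) = θ ε by ring] at habs
      simp only [pow_zero, one_mul]
      have hsp' : |θ ε - θ 0| ≤ Δ * ε := by linarith only [hsp]
      linarith only [hO0, habs, hsp']
    | succ k ih =>
      intro hbd
      have hk1 : (0:ℝ) ≤ ((k:ℝ) + 1) * ε := by positivity
      have ihb := ih (fun τ hτ => hbd τ ⟨hτ.1, le_trans hτ.2 (by push_cast; linarith only [hε0.le])⟩)
      have hw := window (((k:ℝ) + 1) * ε) hk1
        (fun τ hτ => hbd τ ⟨le_trans hk1 hτ.1, by push_cast at hτ ⊢; linarith only [hτ.2]⟩)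
      rw [show ((k:ℝ) + 1) * ε + ε = (((k+1:ℕ):ℝ) + 1) * ε by push_cast; ring] at hw
      have habs := abs_add_le ((1 + K * H * ε) * θ (((k:ℝ) + 1) * ε))
        (θ ((((k+1:ℕ):ℝ) + 1) * ε) - (1 + K * H * ε) * θ (((k:ℝ) + 1) * ε))
      rw [show (1 + K * H * ε) * θ (((k:ℝ) + 1) * ε)
          + (θ ((((k+1:ℕ):ℝ) + 1) * ε) - (1 + K * H * ε) * θ (((k:ℝ) + 1) * ε))
          = θ ((((k+1:ℕ):ℝ) + 1) * ε) by ring] at habs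
      have hrabs : |(1 + K * H * ε) * θ (((k:ℝ) + 1) * ε)|
          = (1 + K * H * ε) * |θ (((k:ℝ) + 1) * ε)| := by
        rw [abs_mul, abs_of_nonneg hr0]
      have hmul := mul_le_mul_of_nonneg_left ihb hr0
      have hEeq : -K * H * (σ + |a|) * Δ * ε ^ 2 / |a|
          = (-(K * H * ε)) * (ε * Δ * (σ + |a|) / |a|) := by ring
      calc |θ ((((k+1:ℕ):ℝ) + 1) * ε)|
          ≤ (1 + K * H * ε) * |θ (((k:ℝ) + 1) * ε)|
            + -K * H * (σ + |a|) * Δ * ε ^ 2 / |a| := by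
            rw [← hrabs]; linarith only [habs, hw]
        _ ≤ (1 + K * H * ε) * ((1 + K * H * ε) ^ k * (|θ 0| + ε * Δ)
            + ε * Δ * (σ + |a|) / |a|) + -K * H * (σ + |a|) * Δ * ε ^ 2 / |a| := by
            linarith only [hmul]
        _ = (1 + K * H * ε) ^ (k + 1) * (|θ 0| + ε * Δ) + ε * Δ * (σ + |a|) / |a| := by
            rw [hEeq]; ring
  -- the threshold bound
  have hσ3A : σ0 + ε * Δ * (σ + 3 * |a|) / |a| < σ := by
    have h1 : (ε * Δ * (σ + 3 * |a|) / |a|) * |a| = ε * Δ * (σ + 3 * |a|) := by field_simp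
    nlinarith only [hM, hA, h1, mul_pos hεΔpos hA, mul_pos hεΔpos hσpos]
  -- quantitative bound under an a-priori bound by σ
  have key : ∀ T : ℝ, 0 ≤ T → (∀ τ ∈ Set.Icc 0 T, |θ τ| ≤ σ) →
      |θ T| ≤ σ0 + ε * Δ * (σ + 3 * |a|) / |a| := by
    intro T hT0 hbd
    by_cases hTε : T ≤ ε
    · have hsp := speed σ hσpos.le 0 T le_rfl hT0 hbd
      rw [hΔeq] at hsp
      have habs := abs_add_le (θ 0) (θ T - θ 0)
      rw [show θ 0 + (θ T - θ 0) = θ T by ring] at habs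
      have h2 : ε * Δ ≤ ε * Δ * (σ + 3 * |a|) / |a| := by
        rw [le_div_iff₀ hA]
        linarith only [mul_pos hεΔpos hσpos, mul_pos hεΔpos hA]
      have h3 : Δ * (T - 0) ≤ Δ * ε := mul_le_mul_of_nonneg_left (by linarith only [hTε]) hΔpos.le
      linarith only [hθ0, habs, hsp, h2, h3]
    · push_neg at hTε
      set k := ⌊(T - ε) / ε⌋₊ with hk
      have hTε0 : 0 ≤ (T - ε) / ε := div_nonneg (by linarith only [hTε]) hε0.le
      have hk1 : ((k:ℝ) + 1) * ε ≤ T := by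
        have h1 : (k:ℝ) ≤ (T - ε) / ε := Nat.floor_le hTε0
        have h2 := (le_div_iff₀ hε0).mp h1
        linarith only [h2]
      have hk2 : T < ((k:ℝ) + 2) * ε := by
        have h1 := Nat.lt_floor_add_one ((T - ε) / ε)
        have h2 := (div_lt_iff₀ hε0).mp h1
        linarith only [h2]
      have hgr := grid k (fun τ hτ => hbd τ ⟨hτ.1, le_trans hτ.2 hk1⟩)
      have hsp := speed σ hσpos.le (((k:ℝ) + 1) * ε) T (by positivity) hk1
        (fun τ hτ => hbd τ ⟨le_trans (by positivity) hτ.1, hτ.2⟩)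
      rw [hΔeq] at hsp
      have habs := abs_add_le (θ (((k:ℝ) + 1) * ε)) (θ T - θ (((k:ℝ) + 1) * ε))
      rw [show θ (((k:ℝ) + 1) * ε) + (θ T - θ (((k:ℝ) + 1) * ε)) = θ T by ring] at habs
      have hrk : (1 + K * H * ε) ^ k ≤ 1 := pow_le_one₀ hr0 hr1
      have hXk : (1 + K * H * ε) ^ k * (|θ 0| + ε * Δ) ≤ |θ 0| + ε * Δ := by
        have := mul_le_mul_of_nonneg_right hrk (by positivity : (0:ℝ) ≤ |θ 0| + ε * Δ)
        linarith only [this]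
      have hΔT : Δ * (T - ((k:ℝ) + 1) * ε) ≤ Δ * ε :=
        mul_le_mul_of_nonneg_left (by linarith only [hk2]) hΔpos.le
      have hsum : (|θ 0| + ε * Δ) + ε * Δ * (σ + |a|) / |a| + ε * Δ
          = |θ 0| + ε * Δ * (σ + 3 * |a|) / |a| := by
        field_simp; ring
      linarith only [hθ0, hgr, hsp, habs, hXk, hΔT, hsum]
  -- global boundedness by σ
  have hglob : ∀ t : ℝ, 0 ≤ t → |θ t| ≤ σ := by
    by_contra hcon
    push_neg at hcon
    obtain ⟨t0, ht0, ht0'⟩ := hcon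
    have hθm : Continuous fun t : ℝ => θ (max t 0) := by
      rw [continuous_iff_continuousAt]
      intro t
      have h1 : Continuous (fun s : ℝ => max s 0) := continuous_id.max continuous_const
      have h2 : ContinuousAt θ (max t 0) := (hode (max t 0) (le_max_right t 0)).continuousAt
      have h3 := ContinuousAt.comp (g := θ) (f := fun s : ℝ => max s 0) h2 h1.continuousAt
      exact h3
    set N := {t : ℝ | 0 ≤ t ∧ σ ≤ |θ (max t 0)|} with hN
    have hne : N.Nonempty := ⟨t0, ht0, by rw [max_eq_left ht0]; exact ht0'.le⟩
    have hbdd : BddBelow N := ⟨0, fun x hx => hx.1⟩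
    have hcl : IsClosed N := by
      have hNe : N = Set.Ici 0 ∩ (fun t => |θ (max t 0)|) ⁻¹' Set.Ici σ := by
        ext t
        simp only [hN, Set.mem_setOf_eq, Set.mem_inter_iff, Set.mem_Ici, Set.mem_preimage]
      rw [hNe]
      exact isClosed_Ici.inter (isClosed_Ici.preimage hθm.abs)
    set T := sInf N with hT
    have hTN : T ∈ N := hcl.csInf_mem hne hbdd
    have hT0 : 0 ≤ T := hTN.1
    have hTσ : σ ≤ |θ T| := by
      have := hTN.2
      rwa [max_eq_left hT0] at this
    have hlt : ∀ τ, 0 ≤ τ → τ < T → |θ τ| < σ := by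
      intro τ h0τ hτT
      by_contra hcc
      push_neg at hcc
      exact absurd (csInf_le hbdd ⟨h0τ, by rw [max_eq_left h0τ]; exact hcc⟩)
        (not_le.mpr hτT)
    rcases eq_or_lt_of_le hT0 with hT0' | hT0'
    · rw [← hT0'] at hTσ
      linarith only [hθ0, hTσ, hσ]
    · have hTle' : |θ T| ≤ σ := by
        have hnb : (nhdsWithin T (Set.Ioo 0 T)).NeBot := by
          apply mem_closure_iff_nhdsWithin_neBot.mp
          rw [closure_Ioo (ne_of_lt hT0')]
          exact Set.right_mem_Icc.mpr hT0'.le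
        have htd : Filter.Tendsto (fun τ => |θ τ|) (nhdsWithin T (Set.Ioo 0 T)) (nhds |θ T|) :=
          Filter.Tendsto.abs ((hode T hT0).continuousAt.continuousWithinAt)
        apply le_of_tendsto htd
        filter_upwards [self_mem_nhdsWithin] with τ hτ
        exact (hlt τ hτ.1.le hτ.2).le
      have hkey := key T hT0 (fun τ hτ => by
        rcases lt_or_eq_of_le hτ.2 with h | h
        · exact (hlt τ hτ.1 h).le
        · rw [h]; exact hTle')
      linarith only [hσ3A, hTσ, hkey]
  have hεΔσ0 : ε * Δ < σ - σ0 := by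
    nlinarith only [hM, hA, mul_pos hεΔpos hσpos, mul_pos hεΔpos hA]
  constructor
  · -- part 1 : t ∈ [0, ε]
    intro t ht
    have hθ0σ : |θ 0| + ε * Δ < σ := by linarith only [hθ0, hεΔσ0]
    refine ⟨?_, hθ0σ⟩
    have hsup : ∀ τ ∈ Set.Icc 0 t, |θ τ| ≤ |θ 0| + ε * Δ := by
      intro τ hτ
      have hsp := speed σ hσpos.le 0 τ le_rfl hτ.1 (fun ρ hρ => hglob ρ hρ.1)
      rw [hΔeq] at hsp
      have habs := abs_add_le (θ 0) (θ τ - θ 0)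
      rw [show θ 0 + (θ τ - θ 0) = θ τ by ring] at habs
      have h1 : Δ * (τ - 0) ≤ Δ * ε :=
        mul_le_mul_of_nonneg_left (by linarith only [hτ.2, ht.2]) hΔpos.le
      linarith only [habs, hsp, h1]
    have hM'0 : (0:ℝ) ≤ |θ 0| + ε * Δ := by positivity
    have hsp2 := speed (|θ 0| + ε * Δ) hM'0 0 t le_rfl ht.1 hsup
    have hsq : ((|θ 0| + ε * Δ) + |a|) ^ 2 < (σ + |a|) ^ 2 := by
      nlinarith only [hθ0σ, hM'0, hA, hσpos]
    have hpos : (0:ℝ) < 2 * -K / |a| := div_pos (by linarith only [hKp]) hA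
    have hClt : (QM + HM / 2 * ((|θ 0| + ε * Δ) + |a|) ^ 2) * (2 * -K / |a|) < Δ := by
      have h := mul_pos (mul_pos (half_pos hHMpos) (sub_pos.mpr hsq)) hpos
      have h9 : (QM + HM / 2 * ((|θ 0| + ε * Δ) + |a|) ^ 2) * (2 * -K / |a|)
          < (QM + HM / 2 * (σ + |a|) ^ 2) * (2 * -K / |a|) := by linarith only [h]
      rw [hΔeq] at h9
      exact h9
    have hC0' : (0:ℝ) ≤ (QM + HM / 2 * ((|θ 0| + ε * Δ) + |a|) ^ 2) * (2 * -K / |a|) :=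
      mul_nonneg (by linarith only [hQM, mul_nonneg hHMpos.le (sq_nonneg ((|θ 0| + ε * Δ) + |a|))]) hpos.le
    have habs := abs_add_le (θ 0) (θ t - θ 0)
    rw [show θ 0 + (θ t - θ 0) = θ t by ring] at habs
    have h1 : (QM + HM / 2 * ((|θ 0| + ε * Δ) + |a|) ^ 2) * (2 * -K / |a|) * (t - 0)
        ≤ (QM + HM / 2 * ((|θ 0| + ε * Δ) + |a|) ^ 2) * (2 * -K / |a|) * ε :=
      mul_le_mul_of_nonneg_left (by linarith only [ht.2]) hC0'
    have h2 := mul_lt_mul_of_pos_right hClt hε0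
    linarith only [habs, hsp2, h1, h2]
  · -- part 2 : t ≥ ε
    intro t ht
    set k := ⌊(t - ε) / ε⌋₊ with hk
    have hTε0 : 0 ≤ (t - ε) / ε := div_nonneg (by linarith only [ht]) hε0.le
    have hk1 : ((k:ℝ) + 1) * ε ≤ t := by
      have h1 : (k:ℝ) ≤ (t - ε) / ε := Nat.floor_le hTε0
      have h2 := (le_div_iff₀ hε0).mp h1
      linarith only [h2]
    have hk2 : t < ((k:ℝ) + 2) * ε := by
      have h1 := Nat.lt_floor_add_one ((t - ε) / ε)
      have h2 := (div_lt_iff₀ hε0).mp h1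
      linarith only [h2]
    have hgr := grid k (fun τ hτ => hglob τ hτ.1)
    have hsp := speed σ hσpos.le (((k:ℝ) + 1) * ε) t (by positivity) hk1
      (fun τ hτ => hglob τ (le_trans (by positivity) hτ.1))
    rw [hΔeq] at hsp
    have habs := abs_add_le (θ (((k:ℝ) + 1) * ε)) (θ t - θ (((k:ℝ) + 1) * ε))
    rw [show θ (((k:ℝ) + 1) * ε) + (θ t - θ (((k:ℝ) + 1) * ε)) = θ t by ring] at habs
    have hΔT : Δ * (t - ((k:ℝ) + 1) * ε) ≤ Δ * ε :=
      mul_le_mul_of_nonneg_left (by linarith only [hk2]) hΔpos.le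
    have hre : 1 + K * H * ε ≤ Real.exp (-(δ * ε)) := by
      have h1 : K * H * ε ≤ K * Hm * ε := by
        linarith only [mul_le_mul_of_nonneg_left hHm' (mul_nonneg hKp.le hε0.le)]
      have h2 := Real.add_one_le_exp (-(δ * ε))
      have h3 : -(δ * ε) = K * Hm * ε := by rw [hδ']; ring
      linarith only [h1, h2, h3]
    have hrk : (1 + K * H * ε) ^ k ≤ Real.exp (-(δ * ε)) ^ k := pow_le_pow_left₀ hr0 hre k
    have hek : Real.exp (-(δ * ε)) ^ k = Real.exp ((k:ℝ) * (-(δ * ε))) :=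
      (Real.exp_nat_mul _ k).symm
    have hX0 : (0:ℝ) ≤ |θ 0| + ε * Δ := by positivity
    have hX'0 : (0:ℝ) < |θ 0| + 3 * ε * Δ / 2 := by positivity
    have hm : (0:ℝ) < -K * Hm := mul_pos hKp hHm
    have p1 : -K * Hm * (σ + |a|) ^ 2 ≤ -K * HM * (σ + |a|) ^ 2 :=
      mul_le_mul_of_nonneg_right (mul_le_mul_of_nonneg_left (hHm'.trans hHM') hKp.le)
        (sq_nonneg _)
    have p2 : -K * Hm * (4 * (σ * |a|)) ≤ -K * Hm * (σ + |a|) ^ 2 :=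
      mul_le_mul_of_nonneg_left hAM hm.le
    have p3 : 4 * σ * (-K * Hm) ≤ Δ := by nlinarith only [p1, p2, hΔlow, hA]
    have f1 : -K * Hm * |θ 0| ≤ -K * Hm * σ :=
      mul_le_mul_of_nonneg_left (hθ0.trans hσ.le) hm.le
    have f2 : -K * Hm * (ε * Δ) ≤ -K * Hm * (2 * σ / 7) :=
      mul_le_mul_of_nonneg_left (by linarith only [hεΔ7]) hm.le
    have hδX : δ * (|θ 0| + 3 * ε * Δ / 2) ≤ Δ / 2 := by
      rw [hδ']
      linarith only [f1, f2, p3, mul_pos hm hσpos]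
    have hstep3 : |θ 0| + ε * Δ ≤ Real.exp (-(δ * ε)) * (|θ 0| + 3 * ε * Δ / 2) := by
      have h2 := Real.add_one_le_exp (-(δ * ε))
      have h4 : (1 - δ * ε) * (|θ 0| + 3 * ε * Δ / 2)
          ≤ Real.exp (-(δ * ε)) * (|θ 0| + 3 * ε * Δ / 2) :=
        mul_le_mul_of_nonneg_right (by linarith only [h2]) hX'0.le
      have h5 : ε * (δ * (|θ 0| + 3 * ε * Δ / 2)) ≤ ε * (Δ / 2) :=
        mul_le_mul_of_nonneg_left hδX hε0.le
      linarith only [h4, h5]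
    have hchain : (1 + K * H * ε) ^ k * (|θ 0| + ε * Δ)
        < Real.exp (-δ * (t - ε)) * (|θ 0| + 3 * ε * Δ / 2) := by
      have c1 : (1 + K * H * ε) ^ k * (|θ 0| + ε * Δ)
          ≤ Real.exp ((k:ℝ) * (-(δ * ε))) * (|θ 0| + ε * Δ) := by
        rw [← hek]; exact mul_le_mul_of_nonneg_right hrk hX0
      have c2 : Real.exp ((k:ℝ) * (-(δ * ε))) * (|θ 0| + ε * Δ)
          ≤ Real.exp ((k:ℝ) * (-(δ * ε))) * (Real.exp (-(δ * ε)) * (|θ 0| + 3 * ε * Δ / 2)) :=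
        mul_le_mul_of_nonneg_left hstep3 (Real.exp_nonneg _)
      have c3 : Real.exp ((k:ℝ) * (-(δ * ε))) * Real.exp (-(δ * ε))
          = Real.exp (-(((k:ℝ) + 1) * (δ * ε))) := by
        rw [← Real.exp_add]; ring_nf
      have c4 : Real.exp (-(((k:ℝ) + 1) * (δ * ε))) < Real.exp (-δ * (t - ε)) := by
        apply Real.exp_lt_exp.mpr
        linarith only [mul_lt_mul_of_pos_left hk2 hδpos]
      calc (1 + K * H * ε) ^ k * (|θ 0| + ε * Δ)
          ≤ Real.exp ((k:ℝ) * (-(δ * ε))) * (|θ 0| + ε * Δ) := c1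
        _ ≤ Real.exp ((k:ℝ) * (-(δ * ε))) * (Real.exp (-(δ * ε)) * (|θ 0| + 3 * ε * Δ / 2)) := c2
        _ = Real.exp (-(((k:ℝ) + 1) * (δ * ε))) * (|θ 0| + 3 * ε * Δ / 2) := by
            rw [← mul_assoc, c3]
        _ < Real.exp (-δ * (t - ε)) * (|θ 0| + 3 * ε * Δ / 2) :=
            mul_lt_mul_of_pos_right c4 hX'0
    have hOsum : ε * Δ * (σ + |a|) / |a| + ε * Δ = ε * Δ * (2 * |a| + σ) / |a| := by
      field_simp; ring
    have hexp1 : Real.exp (-δ * (t - ε)) ≤ 1 := by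
      rw [Real.exp_le_one_iff]
      linarith only [mul_nonneg hδpos.le (by linarith only [ht] : (0:ℝ) ≤ t - ε)]
    have hexpX : Real.exp (-δ * (t - ε)) * (|θ 0| + 3 * ε * Δ / 2) ≤ |θ 0| + 3 * ε * Δ / 2 := by
      have := mul_le_mul_of_nonneg_right hexp1 hX'0.le
      linarith only [this]
    have hD : (ε * Δ * (2 * |a| + σ) / |a|) * (2 * |a|) = ε * Δ * (2 * |a| + σ) * 2 := by
      field_simp
    have hfin2 : (|θ 0| + 3 * ε * Δ / 2) + ε * Δ * (2 * |a| + σ) / |a| < σ := by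
      nlinarith only [hD, hM, hθ0, hA]
    constructor
    · linarith only [habs, hsp, hΔT, hgr, hchain, hOsum]
    · linarith only [hexpX, hfin2]
end

section
/- Let K, H̄, ΔH be n×n real matrices with ‖ΔH‖ ≤ κ for some κ ≥ 0, let P be a symmetric n×n real matrix with I_n ≤ P ≤ p·I_n for some scalar p ≥ 1, and let δ > 0 and ζ > 0 be such that the block matrix Φ₁ = [[H̄ᵀKᵀP + PKH̄ + 2δP + ζκ²I_n, PK], [KᵀP, −ζI_n]] is negative definite. Then the matrix exponential satisfies ‖exp(t·K(H̄+ΔH))‖ ≤ √p·e^{−δt} for all t ≥ 0, where ‖·‖ denotes the induced matrix 2-norm. -/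
open Real Matrix

/-- The operator norm on matrices induced by the Euclidean vector norm. -/
noncomputable def l2OpNorm {n : ℕ} (A : Matrix (Fin n) (Fin n) ℝ) : ℝ :=
  ‖Matrix.toEuclideanCLM (𝕜 := ℝ) A‖

namespace LMIAux

variable {m : ℕ}

lemma dot_self_eq_norm_sq (w : Fin m → ℝ) :
    w ⬝ᵥ w = ‖(WithLp.equiv 2 (Fin m → ℝ)).symm w‖ ^ 2 := by
  have h := EuclideanSpace.inner_toLp_toLp (𝕜 := ℝ) (ι := Fin m) w w
  rw [star_trivial] at h
  rw [← h, real_inner_self_eq_norm_sq]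
  rfl

lemma clm_apply_eq (M : Matrix (Fin m) (Fin m) ℝ) (a : EuclideanSpace ℝ (Fin m)) :
    WithLp.equiv 2 (Fin m → ℝ) (Matrix.toEuclideanCLM (𝕜 := ℝ) M a)
      = M *ᵥ (WithLp.equiv 2 (Fin m → ℝ) a) := by
  exact Matrix.ofLp_toEuclideanCLM M a

lemma inner_eq_dot (a b : EuclideanSpace ℝ (Fin m)) :
    (inner ℝ a b : ℝ) = (WithLp.equiv 2 (Fin m → ℝ) a) ⬝ᵥ (WithLp.equiv 2 (Fin m → ℝ) b) := by
  rw [EuclideanSpace.inner_eq_star_dotProduct, star_trivial]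
  exact dotProduct_comm _ _

lemma dot_mulVec_left (B : Matrix (Fin m) (Fin m) ℝ) (a b : Fin m → ℝ) :
    (B *ᵥ a) ⬝ᵥ b = a ⬝ᵥ (Bᵀ *ᵥ b) := by
  rw [Matrix.dotProduct_mulVec, Matrix.vecMul_transpose]

lemma toEuclideanCLM_exp (M : Matrix (Fin m) (Fin m) ℝ) :
    Matrix.toEuclideanCLM (𝕜 := ℝ) (NormedSpace.exp M)
      = NormedSpace.exp (Matrix.toEuclideanCLM (𝕜 := ℝ) M) := by
  letI : SeminormedRing (Matrix (Fin m) (Fin m) ℝ) := Matrix.linftyOpSemiNormedRing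
  letI : NormedRing (Matrix (Fin m) (Fin m) ℝ) := Matrix.linftyOpNormedRing
  letI : NormedAlgebra ℝ (Matrix (Fin m) (Fin m) ℝ) := Matrix.linftyOpNormedAlgebra
  have hcont : Continuous (Matrix.toEuclideanCLM (𝕜 := ℝ) (n := Fin m)) := by
    let f : Matrix (Fin m) (Fin m) ℝ →ₗ[ℝ]
        (EuclideanSpace ℝ (Fin m) →L[ℝ] EuclideanSpace ℝ (Fin m)) :=
      { toFun := fun M => Matrix.toEuclideanCLM (𝕜 := ℝ) M,
        map_add' := fun a b => map_add _ a b,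
        map_smul' := fun c a => map_smul _ c a }
    exact f.continuous_of_finiteDimensional
  exact NormedSpace.map_exp_of_mem_ball (𝕂 := ℝ) (Matrix.toEuclideanCLM (𝕜 := ℝ) (n := Fin m)) hcont M
    ((NormedSpace.expSeries_radius_eq_top ℝ (Matrix (Fin m) (Fin m) ℝ)).symm ▸ edist_lt_top _ _)

end LMIAux

set_option maxHeartbeats 1000000 in
set_option synthInstance.maxHeartbeats 400000 in
/-- LMI-based exponential bound on the matrix exponential. -/
theorem matrix_exp_bound_of_LMI
    (n : ℕ)
    (K Hbar ΔH P : Matrix (Fin (n + 1)) (Fin (n + 1)) ℝ)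
    (κ p δ ζ : ℝ)
    (hκ : 0 ≤ κ) (hΔH : l2OpNorm ΔH ≤ κ)
    (hPsymm : P.IsSymm) (hp : 1 ≤ p)
    (hP1 : (P - (1 : Matrix (Fin (n + 1)) (Fin (n + 1)) ℝ)).PosSemidef)
    (hP2 : (p • (1 : Matrix (Fin (n + 1)) (Fin (n + 1)) ℝ) - P).PosSemidef)
    (hδ : 0 < δ) (hζ : 0 < ζ)
    (hΦ1 : (-(Matrix.fromBlocks
        (Hbarᵀ * Kᵀ * P + P * K * Hbar + (2 * δ) • P
          + (ζ * κ ^ 2) • (1 : Matrix (Fin (n + 1)) (Fin (n + 1)) ℝ))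
        (P * K) (Kᵀ * P)
        (-(ζ • (1 : Matrix (Fin (n + 1)) (Fin (n + 1)) ℝ))))).PosDef)
    (t : ℝ) (ht : 0 ≤ t) :
    l2OpNorm (NormedSpace.exp (t • (K * (Hbar + ΔH))))
      ≤ Real.sqrt p * Real.exp (-δ * t) := by
  have hp0 : (0:ℝ) ≤ p := by linarith
  set A : Matrix (Fin (n+1)) (Fin (n+1)) ℝ := K * (Hbar + ΔH) with hA
  -- pointwise bounds from P
  have hPlow : ∀ w : Fin (n+1) → ℝ, w ⬝ᵥ w ≤ w ⬝ᵥ (P *ᵥ w) := by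
    intro w
    have h := hP1.dotProduct_mulVec_nonneg w
    rw [star_trivial, Matrix.sub_mulVec, Matrix.one_mulVec, dotProduct_sub] at h
    linarith
  have hPhigh : ∀ w : Fin (n+1) → ℝ, w ⬝ᵥ (P *ᵥ w) ≤ p * (w ⬝ᵥ w) := by
    intro w
    have h := hP2.dotProduct_mulVec_nonneg w
    rw [star_trivial, Matrix.sub_mulVec, Matrix.smul_mulVec, Matrix.one_mulVec,
      dotProduct_sub, dotProduct_smul, smul_eq_mul] at h
    linarith
  -- bound from ΔH
  have hΔ : ∀ x : Fin (n+1) → ℝ, (ΔH *ᵥ x) ⬝ᵥ (ΔH *ᵥ x) ≤ κ^2 * (x ⬝ᵥ x) := by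
    intro x
    rw [LMIAux.dot_self_eq_norm_sq, LMIAux.dot_self_eq_norm_sq]
    have h1 : (WithLp.equiv 2 (Fin (n+1) → ℝ)).symm (ΔH *ᵥ x)
        = Matrix.toEuclideanCLM (𝕜 := ℝ) ΔH ((WithLp.equiv 2 (Fin (n+1) → ℝ)).symm x) := by
      exact (Matrix.toEuclideanCLM_toLp ΔH x).symm
    rw [h1]
    have h3 : ‖Matrix.toEuclideanCLM (𝕜 := ℝ) ΔH ((WithLp.equiv 2 (Fin (n+1) → ℝ)).symm x)‖
        ≤ κ * ‖(WithLp.equiv 2 (Fin (n+1) → ℝ)).symm x‖ := by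
      refine ((Matrix.toEuclideanCLM (𝕜 := ℝ) ΔH).le_opNorm _).trans ?_
      exact mul_le_mul_of_nonneg_right hΔH (norm_nonneg _)
    calc ‖Matrix.toEuclideanCLM (𝕜 := ℝ) ΔH ((WithLp.equiv 2 (Fin (n+1) → ℝ)).symm x)‖^2
        ≤ (κ * ‖(WithLp.equiv 2 (Fin (n+1) → ℝ)).symm x‖)^2 :=
          pow_le_pow_left₀ (norm_nonneg _) h3 2
      _ = κ^2 * ‖(WithLp.equiv 2 (Fin (n+1) → ℝ)).symm x‖^2 := by ring
  -- key quadratic form inequality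
  have key : ∀ x : Fin (n+1) → ℝ,
      (A *ᵥ x) ⬝ᵥ (P *ᵥ x) + x ⬝ᵥ (P *ᵥ (A *ᵥ x)) + 2*δ*(x ⬝ᵥ (P *ᵥ x)) ≤ 0 := by
    intro x
    set y : Fin (n+1) → ℝ := ΔH *ᵥ x with hy
    have hz := hΦ1.posSemidef.dotProduct_mulVec_nonneg (Sum.elim x y)
    rw [star_trivial, Matrix.neg_mulVec, dotProduct_neg] at hz
    replace hz := neg_nonneg.mp hz
    rw [Matrix.fromBlocks_mulVec] at hz
    simp only [Sum.elim_comp_inl, Sum.elim_comp_inr] at hz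
    rw [sumElim_dotProduct_sumElim] at hz
    simp only [Matrix.add_mulVec, dotProduct_add, Matrix.smul_mulVec,
      Matrix.one_mulVec, dotProduct_smul, smul_eq_mul, Matrix.neg_mulVec,
      dotProduct_neg] at hz
    have e1 : (A *ᵥ x) ⬝ᵥ (P *ᵥ x)
        = x ⬝ᵥ ((Hbarᵀ * Kᵀ * P) *ᵥ x) + y ⬝ᵥ ((Kᵀ * P) *ᵥ x) := by
      have hAx : A *ᵥ x = (K * Hbar) *ᵥ x + K *ᵥ y := by
        rw [hA, mul_add, Matrix.add_mulVec, hy, Matrix.mulVec_mulVec]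
      rw [hAx, add_dotProduct]
      congr 1
      · rw [LMIAux.dot_mulVec_left, Matrix.transpose_mul, Matrix.mulVec_mulVec, Matrix.mul_assoc]
      · rw [LMIAux.dot_mulVec_left, Matrix.mulVec_mulVec]
    have e2 : x ⬝ᵥ (P *ᵥ (A *ᵥ x))
        = x ⬝ᵥ ((P * K * Hbar) *ᵥ x) + x ⬝ᵥ ((P * K) *ᵥ y) := by
      have hPA : P *ᵥ (A *ᵥ x) = (P * K * Hbar) *ᵥ x + (P * K) *ᵥ y := by
        rw [Matrix.mulVec_mulVec, hA, hy, Matrix.mulVec_mulVec, ← Matrix.add_mulVec]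
        congr 1
        rw [← Matrix.mul_assoc, mul_add, Matrix.mul_assoc, Matrix.mul_assoc]
      rw [hPA, dotProduct_add]
    have haux : 0 ≤ ζ * (κ^2 * (x ⬝ᵥ x) - y ⬝ᵥ y) :=
      mul_nonneg hζ.le (by linarith [hΔ x])
    rw [e1, e2]
    nlinarith [hz, haux]
  -- move to the CLM side
  have hexp_eq : Matrix.toEuclideanCLM (𝕜 := ℝ) (NormedSpace.exp (t • A))
      = NormedSpace.exp (t • (Matrix.toEuclideanCLM (𝕜 := ℝ) A)) := by
    rw [LMIAux.toEuclideanCLM_exp, _root_.map_smul]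
  have hvec : ∀ v : EuclideanSpace ℝ (Fin (n+1)),
      ‖NormedSpace.exp (t • (Matrix.toEuclideanCLM (𝕜 := ℝ) A)) v‖
        ≤ (Real.sqrt p * Real.exp (-δ * t)) * ‖v‖ := by
    intro v
    set L : EuclideanSpace ℝ (Fin (n+1)) →L[ℝ] EuclideanSpace ℝ (Fin (n+1)) :=
      Matrix.toEuclideanCLM (𝕜 := ℝ) A with hLdef
    set Pc : EuclideanSpace ℝ (Fin (n+1)) →L[ℝ] EuclideanSpace ℝ (Fin (n+1)) :=
      Matrix.toEuclideanCLM (𝕜 := ℝ) P with hPcdef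
    set u : ℝ → EuclideanSpace ℝ (Fin (n+1)) := fun s => NormedSpace.exp (s • L) v with hu_def
    have hu : ∀ s, HasDerivAt u (L (u s)) s := by
      intro s
      have h1 : HasDerivAt (fun r : ℝ => NormedSpace.exp (r • L))
          (L * NormedSpace.exp (s • L)) s := hasDerivAt_exp_smul_const' L s
      have h2 := h1.clm_apply (hasDerivAt_const s v)
      simpa [hu_def] using h2
    set f : ℝ → ℝ := fun s => (inner ℝ (u s) (Pc (u s)) : ℝ) with hf_def
    have hPu : ∀ s, HasDerivAt (fun r => Pc (u r)) (Pc (L (u s))) s := by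
      intro s
      have := (hasDerivAt_const s Pc).clm_apply (hu s)
      simpa using this
    have hf : ∀ s, HasDerivAt f
        ((inner ℝ (u s) (Pc (L (u s))) : ℝ) + (inner ℝ (L (u s)) (Pc (u s)) : ℝ)) s :=
      fun s => (hu s).inner ℝ (hPu s)
    have hclmP : ∀ w : EuclideanSpace ℝ (Fin (n+1)),
        WithLp.equiv 2 (Fin (n+1) → ℝ) (Pc w) = P *ᵥ (WithLp.equiv 2 (Fin (n+1) → ℝ) w) :=
      fun w => LMIAux.clm_apply_eq P w
    have hclmA : ∀ w : EuclideanSpace ℝ (Fin (n+1)),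
        WithLp.equiv 2 (Fin (n+1) → ℝ) (L w) = A *ᵥ (WithLp.equiv 2 (Fin (n+1) → ℝ) w) :=
      fun w => LMIAux.clm_apply_eq A w
    have hfs : ∀ s, f s = (WithLp.equiv 2 (Fin (n+1) → ℝ) (u s)) ⬝ᵥ
        (P *ᵥ (WithLp.equiv 2 (Fin (n+1) → ℝ) (u s))) := by
      intro s
      simp only [hf_def]
      rw [LMIAux.inner_eq_dot, hclmP]
    have hquad : ∀ s, (inner ℝ (u s) (Pc (L (u s))) : ℝ) + (inner ℝ (L (u s)) (Pc (u s)) : ℝ)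
        ≤ -(2*δ) * f s := by
      intro s
      have h1 : (inner ℝ (u s) (Pc (L (u s))) : ℝ)
          = (WithLp.equiv 2 (Fin (n+1) → ℝ) (u s)) ⬝ᵥ
            (P *ᵥ (A *ᵥ (WithLp.equiv 2 (Fin (n+1) → ℝ) (u s)))) := by
        rw [LMIAux.inner_eq_dot, hclmP, hclmA]
      have h2 : (inner ℝ (L (u s)) (Pc (u s)) : ℝ)
          = (A *ᵥ (WithLp.equiv 2 (Fin (n+1) → ℝ) (u s))) ⬝ᵥ
            (P *ᵥ (WithLp.equiv 2 (Fin (n+1) → ℝ) (u s))) := by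
        rw [LMIAux.inner_eq_dot, hclmP, hclmA]
      rw [h1, h2, hfs s]
      have := key (WithLp.equiv 2 (Fin (n+1) → ℝ) (u s))
      linarith
    set g : ℝ → ℝ := fun s => Real.exp (2*δ*s) * f s with hg_def
    have hg : ∀ s, HasDerivAt g
        (Real.exp (2*δ*s) * (2*δ) * f s + Real.exp (2*δ*s) *
          ((inner ℝ (u s) (Pc (L (u s))) : ℝ) + (inner ℝ (L (u s)) (Pc (u s)) : ℝ))) s := by
      intro s
      have hexp : HasDerivAt (fun r : ℝ => Real.exp (2*δ*r)) (Real.exp (2*δ*s) * (2*δ)) s := by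
        have hlin : HasDerivAt (fun r : ℝ => 2*δ*r) (2*δ) s := by
          simpa using (hasDerivAt_id s).const_mul (2*δ)
        exact hlin.exp
      exact hexp.mul (hf s)
    have hganti : Antitone g := by
      refine antitone_of_deriv_nonpos (fun s => (hg s).differentiableAt) (fun s => ?_)
      rw [(hg s).deriv]
      have h1 := hquad s
      have h3 := mul_le_mul_of_nonneg_left h1 (Real.exp_pos (2*δ*s)).le
      nlinarith [h3]
    have hu0 : u 0 = v := by
      simp only [hu_def]
      rw [show (0:ℝ) • L = 0 from zero_smul ℝ L, NormedSpace.exp_zero]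
      rfl
    have hEt : (0:ℝ) < Real.exp (2*δ*t) := Real.exp_pos _
    have h4 : Real.exp (2*δ*t) * f t ≤ p * ‖v‖^2 := by
      have hg0 : g 0 = f 0 := by simp only [hg_def]; simp
      have hf0 : f 0 ≤ p * ‖v‖^2 := by
        rw [hfs 0, hu0]
        have h := hPhigh (WithLp.equiv 2 (Fin (n+1) → ℝ) v)
        have hd : (WithLp.equiv 2 (Fin (n+1) → ℝ) v) ⬝ᵥ (WithLp.equiv 2 (Fin (n+1) → ℝ) v)
            = ‖v‖^2 := by
          rw [LMIAux.dot_self_eq_norm_sq]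
          simp
        rw [hd] at h
        exact h
      calc Real.exp (2*δ*t) * f t = g t := by simp only [hg_def]
        _ ≤ g 0 := hganti ht
        _ = f 0 := hg0
        _ ≤ p * ‖v‖^2 := hf0
    have hlow : ‖u t‖^2 ≤ f t := by
      rw [hfs t]
      have h := hPlow (WithLp.equiv 2 (Fin (n+1) → ℝ) (u t))
      have hd : (WithLp.equiv 2 (Fin (n+1) → ℝ) (u t)) ⬝ᵥ (WithLp.equiv 2 (Fin (n+1) → ℝ) (u t))
          = ‖u t‖^2 := by
        rw [LMIAux.dot_self_eq_norm_sq]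
        simp
      rw [hd] at h
      exact h
    have hnorm2 : ‖u t‖^2 ≤ (Real.sqrt p * Real.exp (-δ*t) * ‖v‖)^2 := by
      have he : (Real.exp (-δ*t))^2 = Real.exp (-(2*δ*t)) := by
        rw [sq, ← Real.exp_add]; ring_nf
      have hsq : (Real.sqrt p * Real.exp (-δ*t) * ‖v‖)^2
          = Real.exp (-(2*δ*t)) * (p * ‖v‖^2) := by
        have hx : (Real.sqrt p * Real.exp (-δ*t) * ‖v‖)^2
            = (Real.sqrt p)^2 * (Real.exp (-δ*t))^2 * ‖v‖^2 := by ring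
        rw [hx, Real.sq_sqrt hp0, he]; ring
      rw [hsq]
      have h5 : f t ≤ Real.exp (-(2*δ*t)) * (p * ‖v‖^2) := by
        rw [Real.exp_neg, inv_mul_eq_div, le_div_iff₀ hEt]
        nlinarith [h4]
      linarith [hlow]
    have hnn : (0:ℝ) ≤ Real.sqrt p * Real.exp (-δ*t) * ‖v‖ := by positivity
    have hfin := le_of_pow_le_pow_left₀ two_ne_zero hnn hnorm2
    calc ‖NormedSpace.exp (t • L) v‖ = ‖u t‖ := by rw [hu_def]
      _ ≤ Real.sqrt p * Real.exp (-δ*t) * ‖v‖ := hfin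
  unfold l2OpNorm
  rw [hexp_eq]
  exact ContinuousLinearMap.opNorm_le_bound _ (by positivity) hvec
end

section
/- Let L, H̄, ΔH be n×n real matrices with ‖ΔH‖ ≤ κ for some κ ≥ 0, let P be a symmetric n×n real matrix with I_n ≤ P ≤ p·I_n for some scalar p ≥ 1, and let λ > 0, ε* > 0 with λε* < 1 and ζ > 0 be such that the block matrix Φ₁ = [[H̄ᵀLᵀP + PLH̄ + ε*H̄ᵀLᵀPLH̄ + 2λP + ζκ²I_n, PL + ε*H̄ᵀLᵀPL], [LᵀP + ε*LᵀPLH̄, −ζI_n + ε*LᵀPL]] is negative definite. Then for every ε ∈ (0, ε*] and every natural number k, ‖(I_n + εL(H̄+ΔH))^k‖ ≤ √p·(1−λε)^k, where ‖·‖ denotes the induced matrix 2-norm. -/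
open Real Matrix

section aux

variable {m : ℕ}

lemma dp_transpose (B : Matrix (Fin m) (Fin m) ℝ) (x u : Fin m → ℝ) :
    x ⬝ᵥ (Bᵀ *ᵥ u) = (B *ᵥ x) ⬝ᵥ u := by
  rw [Matrix.dotProduct_mulVec, Matrix.vecMul_transpose]

lemma euclid_norm_sq (y : Fin m → ℝ) :
    ‖(WithLp.equiv 2 (Fin m → ℝ)).symm y‖ ^ 2 = y ⬝ᵥ y := by
  rw [← real_inner_self_eq_norm_sq]
  simp only [PiLp.inner_apply, RCLike.inner_apply, conj_trivial, dotProduct]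
  rfl

set_option synthInstance.maxHeartbeats 1000000 in
lemma mulVec_norm_le (B : Matrix (Fin m) (Fin m) ℝ) (x : Fin m → ℝ) :
    ‖(WithLp.equiv 2 (Fin m → ℝ)).symm (B *ᵥ x)‖
      ≤ l2OpNorm B * ‖(WithLp.equiv 2 (Fin m → ℝ)).symm x‖ := by
  have := (Matrix.toEuclideanCLM (𝕜 := ℝ) B).le_opNorm ((WithLp.equiv 2 (Fin m → ℝ)).symm x)
  simpa [Matrix.toEuclideanCLM_toLp, Matrix.toLin'_apply, l2OpNorm] using this

lemma l2OpNorm_le_of_forall (B : Matrix (Fin m) (Fin m) ℝ) (C : ℝ) (hC : 0 ≤ C)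
    (h : ∀ x : Fin m → ℝ,
      ‖(WithLp.equiv 2 (Fin m → ℝ)).symm (B *ᵥ x)‖ ≤ C * ‖(WithLp.equiv 2 (Fin m → ℝ)).symm x‖) :
    l2OpNorm B ≤ C := by
  refine ContinuousLinearMap.opNorm_le_bound _ hC fun x => ?_
  have := h ((WithLp.equiv 2 (Fin m → ℝ)) x)
  simp [Matrix.toLin'_apply] at this
  exact this

end aux

/-- LMI-based exponential bound on matrix powers. -/
theorem matrix_pow_bound_of_LMI
    (n : ℕ)
    (L Hbar ΔH P : Matrix (Fin (n + 1)) (Fin (n + 1)) ℝ)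
    (κ p lam εstar ζ : ℝ)
    (hκ : 0 ≤ κ) (hΔH : l2OpNorm ΔH ≤ κ)
    (hPsymm : P.IsSymm) (hp : 1 ≤ p)
    (hP1 : (P - (1 : Matrix (Fin (n + 1)) (Fin (n + 1)) ℝ)).PosSemidef)
    (hP2 : (p • (1 : Matrix (Fin (n + 1)) (Fin (n + 1)) ℝ) - P).PosSemidef)
    (hlam : 0 < lam) (hεstar : 0 < εstar) (hlamε : lam * εstar < 1) (hζ : 0 < ζ)
    (hΦ1 : (-(Matrix.fromBlocks
        (Hbarᵀ * Lᵀ * P + P * L * Hbar + εstar • (Hbarᵀ * Lᵀ * P * L * Hbar)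
          + (2 * lam) • P + (ζ * κ ^ 2) • (1 : Matrix (Fin (n + 1)) (Fin (n + 1)) ℝ))
        (P * L + εstar • (Hbarᵀ * Lᵀ * P * L))
        (Lᵀ * P + εstar • (Lᵀ * P * L * Hbar))
        (-(ζ • (1 : Matrix (Fin (n + 1)) (Fin (n + 1)) ℝ)) + εstar • (Lᵀ * P * L)))).PosDef)
    (ε : ℝ) (hε : ε ∈ Set.Ioc 0 εstar) (k : ℕ) :
    l2OpNorm (((1 : Matrix (Fin (n + 1)) (Fin (n + 1)) ℝ) + ε • (L * (Hbar + ΔH))) ^ k)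
      ≤ Real.sqrt p * (1 - lam * ε) ^ k := by
  obtain ⟨hε0, hεle⟩ := hε
  set M := L * (Hbar + ΔH) with hM
  set A := (1 : Matrix (Fin (n + 1)) (Fin (n + 1)) ℝ) + ε • M with hA
  set r := 1 - lam * ε with hr
  have hr0 : 0 < r := by
    have : lam * ε ≤ lam * εstar := by nlinarith
    simp only [hr]; linarith
  -- P is positive semidefinite
  have hPpsd : P.PosSemidef := by
    have := hP1.add (Matrix.PosSemidef.one
      (n := Fin (n + 1)) (R := ℝ))
    simpa using this
  -- lower and upper quadratic bounds on P
  have hPlow : ∀ x : Fin (n + 1) → ℝ, x ⬝ᵥ x ≤ x ⬝ᵥ (P *ᵥ x) := by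
    intro x
    have := hP1.dotProduct_mulVec_nonneg x
    simp only [Matrix.sub_mulVec, Matrix.one_mulVec, dotProduct_sub, star_trivial] at this
    linarith
  have hPhigh : ∀ x : Fin (n + 1) → ℝ, x ⬝ᵥ (P *ᵥ x) ≤ p * (x ⬝ᵥ x) := by
    intro x
    have := hP2.dotProduct_mulVec_nonneg x
    simp only [Matrix.sub_mulVec, Matrix.smul_mulVec, Matrix.one_mulVec, dotProduct_sub,
      dotProduct_smul, smul_eq_mul, star_trivial] at this
    linarith
  -- bound on ΔH
  have hΔHbound : ∀ x : Fin (n + 1) → ℝ, (ΔH *ᵥ x) ⬝ᵥ (ΔH *ᵥ x) ≤ κ ^ 2 * (x ⬝ᵥ x) := by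
    intro x
    have h1 := mulVec_norm_le ΔH x
    have h2 : l2OpNorm ΔH * ‖(WithLp.equiv 2 (Fin (n + 1) → ℝ)).symm x‖
        ≤ κ * ‖(WithLp.equiv 2 (Fin (n + 1) → ℝ)).symm x‖ :=
      mul_le_mul_of_nonneg_right hΔH (norm_nonneg _)
    have h3 := h1.trans h2
    have h4 : ‖(WithLp.equiv 2 (Fin (n + 1) → ℝ)).symm (ΔH *ᵥ x)‖ ^ 2
        ≤ (κ * ‖(WithLp.equiv 2 (Fin (n + 1) → ℝ)).symm x‖) ^ 2 := by
      apply sq_le_sq' _ h3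
      have := norm_nonneg ((WithLp.equiv 2 (Fin (n + 1) → ℝ)).symm (ΔH *ᵥ x))
      nlinarith [norm_nonneg ((WithLp.equiv 2 (Fin (n + 1) → ℝ)).symm x)]
    rw [euclid_norm_sq] at h4
    calc (ΔH *ᵥ x) ⬝ᵥ (ΔH *ᵥ x) ≤ (κ * ‖(WithLp.equiv 2 (Fin (n + 1) → ℝ)).symm x‖) ^ 2 := h4
      _ = κ ^ 2 * ‖(WithLp.equiv 2 (Fin (n + 1) → ℝ)).symm x‖ ^ 2 := by ring
      _ = κ ^ 2 * (x ⬝ᵥ x) := by rw [euclid_norm_sq]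
  -- The key one-step contraction
  have key : ∀ x : Fin (n + 1) → ℝ,
      (A *ᵥ x) ⬝ᵥ (P *ᵥ (A *ᵥ x)) ≤ r ^ 2 * (x ⬝ᵥ (P *ᵥ x)) := by
    intro x
    set w := ΔH *ᵥ x with hw
    set mx := M *ᵥ x with hmx
    have hΦle : (Sum.elim x w) ⬝ᵥ ((Matrix.fromBlocks
        (Hbarᵀ * Lᵀ * P + P * L * Hbar + εstar • (Hbarᵀ * Lᵀ * P * L * Hbar)
          + (2 * lam) • P + (ζ * κ ^ 2) • (1 : Matrix (Fin (n + 1)) (Fin (n + 1)) ℝ))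
        (P * L + εstar • (Hbarᵀ * Lᵀ * P * L))
        (Lᵀ * P + εstar • (Lᵀ * P * L * Hbar))
        (-(ζ • (1 : Matrix (Fin (n + 1)) (Fin (n + 1)) ℝ)) + εstar • (Lᵀ * P * L))) *ᵥ
        (Sum.elim x w)) ≤ 0 := by
      have := hΦ1.posSemidef.dotProduct_mulVec_nonneg (Sum.elim x w)
      simp only [star_trivial, Matrix.neg_mulVec, dotProduct_neg] at this
      linarith
    have expand : (Sum.elim x w) ⬝ᵥ ((Matrix.fromBlocks
        (Hbarᵀ * Lᵀ * P + P * L * Hbar + εstar • (Hbarᵀ * Lᵀ * P * L * Hbar)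
          + (2 * lam) • P + (ζ * κ ^ 2) • (1 : Matrix (Fin (n + 1)) (Fin (n + 1)) ℝ))
        (P * L + εstar • (Hbarᵀ * Lᵀ * P * L))
        (Lᵀ * P + εstar • (Lᵀ * P * L * Hbar))
        (-(ζ • (1 : Matrix (Fin (n + 1)) (Fin (n + 1)) ℝ)) + εstar • (Lᵀ * P * L))) *ᵥ
        (Sum.elim x w))
        = (x ⬝ᵥ (P *ᵥ mx) + mx ⬝ᵥ (P *ᵥ x)) + εstar * (mx ⬝ᵥ (P *ᵥ mx))
          + 2 * lam * (x ⬝ᵥ (P *ᵥ x)) + ζ * κ ^ 2 * (x ⬝ᵥ x) - ζ * (w ⬝ᵥ w) := by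
      have hmx' : mx = L *ᵥ (Hbar *ᵥ x) + L *ᵥ w := by
        simp [hmx, hM, hw, Matrix.add_mulVec, Matrix.mulVec_add, ← Matrix.mulVec_mulVec,
          Matrix.mul_add]
      rw [hmx']
      simp only [Matrix.fromBlocks_mulVec, sumElim_dotProduct_sumElim,
        Matrix.add_mulVec, Matrix.neg_mulVec, Matrix.smul_mulVec, Matrix.one_mulVec,
        ← Matrix.mulVec_mulVec, dotProduct_add, add_dotProduct, dotProduct_smul, dotProduct_neg,
        smul_eq_mul, dp_transpose, Matrix.mulVec_add, Matrix.mulVec_smul,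
        Sum.elim_comp_inl, Sum.elim_comp_inr]
      ring
    rw [expand] at hΦle
    have hc : 0 ≤ mx ⬝ᵥ (P *ᵥ mx) := by simpa using hPpsd.dotProduct_mulVec_nonneg mx
    have ha : 0 ≤ x ⬝ᵥ (P *ᵥ x) := by simpa using hPpsd.dotProduct_mulVec_nonneg x
    have hwb : w ⬝ᵥ w ≤ κ ^ 2 * (x ⬝ᵥ x) := hΔHbound x
    have hζw : 0 ≤ ζ * κ ^ 2 * (x ⬝ᵥ x) - ζ * (w ⬝ᵥ w) := by nlinarith
    have h5 : x ⬝ᵥ (P *ᵥ mx) + mx ⬝ᵥ (P *ᵥ x) + εstar * (mx ⬝ᵥ (P *ᵥ mx))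
        + 2 * lam * (x ⬝ᵥ (P *ᵥ x)) ≤ 0 := by linarith
    have hAx : A *ᵥ x = x + ε • mx := by
      simp [hA, Matrix.add_mulVec, Matrix.one_mulVec, Matrix.smul_mulVec, hmx]
    rw [hAx]
    have hexp2 : (x + ε • mx) ⬝ᵥ (P *ᵥ (x + ε • mx))
        = x ⬝ᵥ (P *ᵥ x) + ε * (x ⬝ᵥ (P *ᵥ mx) + mx ⬝ᵥ (P *ᵥ x)) + ε ^ 2 * (mx ⬝ᵥ (P *ᵥ mx)) := by
      simp only [Matrix.mulVec_add, Matrix.mulVec_smul, dotProduct_add, add_dotProduct,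
        dotProduct_smul, smul_dotProduct, smul_eq_mul]
      ring
    rw [hexp2, hr]
    nlinarith [mul_le_mul_of_nonneg_left h5 hε0.le,
      mul_nonneg (mul_nonneg hε0.le (sub_nonneg.2 hεle)) hc,
      mul_nonneg (mul_nonneg (mul_nonneg hlam.le hlam.le) (mul_nonneg hε0.le hε0.le)) ha]
  -- iterate
  have iter : ∀ x : Fin (n + 1) → ℝ,
      ((A ^ k) *ᵥ x) ⬝ᵥ (P *ᵥ ((A ^ k) *ᵥ x)) ≤ r ^ (2 * k) * (x ⬝ᵥ (P *ᵥ x)) := by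
    induction k with
    | zero => intro x; simp [Matrix.one_mulVec]
    | succ k ih =>
      intro x
      have h1 : (A ^ (k + 1)) *ᵥ x = (A ^ k) *ᵥ (A *ᵥ x) := by
        rw [pow_succ, ← Matrix.mulVec_mulVec]
      rw [h1]
      calc ((A ^ k) *ᵥ (A *ᵥ x)) ⬝ᵥ (P *ᵥ ((A ^ k) *ᵥ (A *ᵥ x)))
          ≤ r ^ (2 * k) * ((A *ᵥ x) ⬝ᵥ (P *ᵥ (A *ᵥ x))) := ih (A *ᵥ x)
        _ ≤ r ^ (2 * k) * (r ^ 2 * (x ⬝ᵥ (P *ᵥ x))) := by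
            exact mul_le_mul_of_nonneg_left (key x) (by positivity)
        _ = r ^ (2 * (k + 1)) * (x ⬝ᵥ (P *ᵥ x)) := by ring
  -- conclude
  apply l2OpNorm_le_of_forall
  · positivity
  intro x
  have h1 : ((A ^ k) *ᵥ x) ⬝ᵥ ((A ^ k) *ᵥ x) ≤ p * r ^ (2 * k) * (x ⬝ᵥ x) := by
    calc ((A ^ k) *ᵥ x) ⬝ᵥ ((A ^ k) *ᵥ x) ≤ ((A ^ k) *ᵥ x) ⬝ᵥ (P *ᵥ ((A ^ k) *ᵥ x)) :=
          hPlow _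
      _ ≤ r ^ (2 * k) * (x ⬝ᵥ (P *ᵥ x)) := iter x
      _ ≤ r ^ (2 * k) * (p * (x ⬝ᵥ x)) := mul_le_mul_of_nonneg_left (hPhigh x) (by positivity)
      _ = p * r ^ (2 * k) * (x ⬝ᵥ x) := by ring
  have h2 : ‖(WithLp.equiv 2 (Fin (n + 1) → ℝ)).symm ((A ^ k) *ᵥ x)‖ ^ 2
      ≤ (Real.sqrt p * r ^ k * ‖(WithLp.equiv 2 (Fin (n + 1) → ℝ)).symm x‖) ^ 2 := by
    rw [euclid_norm_sq]
    have hs : (Real.sqrt p * r ^ k * ‖(WithLp.equiv 2 (Fin (n + 1) → ℝ)).symm x‖) ^ 2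
        = p * r ^ (2 * k) * ‖(WithLp.equiv 2 (Fin (n + 1) → ℝ)).symm x‖ ^ 2 := by
      rw [mul_pow, mul_pow, Real.sq_sqrt (by linarith : (0:ℝ) ≤ p), ← pow_mul]
      ring_nf
    rw [hs, euclid_norm_sq]
    exact h1
  calc ‖(WithLp.equiv 2 (Fin (n + 1) → ℝ)).symm ((A ^ k) *ᵥ x)‖
      = Real.sqrt (‖(WithLp.equiv 2 (Fin (n + 1) → ℝ)).symm ((A ^ k) *ᵥ x)‖ ^ 2) :=
        (Real.sqrt_sq (norm_nonneg _)).symm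
    _ ≤ Real.sqrt ((Real.sqrt p * r ^ k * ‖(WithLp.equiv 2 (Fin (n + 1) → ℝ)).symm x‖) ^ 2) :=
        Real.sqrt_le_sqrt h2
    _ = Real.sqrt p * r ^ k * ‖(WithLp.equiv 2 (Fin (n + 1) → ℝ)).symm x‖ :=
        Real.sqrt_sq (by positivity)
    _ = Real.sqrt p * (1 - lam * ε) ^ k * ‖(WithLp.equiv 2 (Fin (n + 1) → ℝ)).symm x‖ := by
        rw [hr]
end
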